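/- Let A₁, …, A_g be self-adjoint n×n complex matrices with A_g = [[0, 0],[0, D]] in block form where D is positive definite with D ≥ εI (ε > 0), and Aᵢ = [[0, Bᵢ],[Bᵢ*, Cᵢ]] for 1 ≤ i ≤ g−1 (zero upper-left block). Then there is a constant M > 0, namely M⁻¹ = Σ_{i=1}^{g−1} (2‖Bᵢ‖ + ‖Cᵢ‖)²/ε, such that for every unit vector v ∈ ℂⁿ, the point x = (⟨A₁v, v⟩, …, ⟨A_gv, v⟩) satisfies x_g ≥ M · Σ_{i=1}^{g−1} xᵢ². -/

import Mathlib

open Matrix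
open scoped ComplexOrder

private lemma conj_mul_self (z : ℂ) : (starRingEnd ℂ) z * z = ((‖z‖ : ℂ)) ^ 2 := by
  rw [mul_comm, Complex.mul_conj, Complex.normSq_eq_norm_sq]
  norm_cast

private lemma dot_bound {α β : Type*} [Fintype α] [Fintype β]
    (w : α → ℂ) (M : Matrix α β ℂ) (u : β → ℂ) (s t : ℝ)
    (hw : ∀ a, ‖w a‖ ≤ s) (hu : ∀ b, ‖u b‖ ≤ t)
    (hs : 0 ≤ s) (ht : 0 ≤ t) :
    ‖dotProduct (star w) (M *ᵥ u)‖ ≤ s * (∑ a, ∑ b, ‖M a b‖) * t := by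
  have h1 : dotProduct (star w) (M *ᵥ u)
      = ∑ a, ∑ b, (starRingEnd ℂ) (w a) * (M a b * u b) := by
    simp [dotProduct, mulVec, Finset.mul_sum]
  rw [h1]
  calc ‖∑ a, ∑ b, (starRingEnd ℂ) (w a) * (M a b * u b)‖
      ≤ ∑ a, ∑ b, ‖(starRingEnd ℂ) (w a) * (M a b * u b)‖ := by
        refine (norm_sum_le _ _).trans ?_
        exact Finset.sum_le_sum fun a _ => norm_sum_le _ _
    _ ≤ ∑ a, ∑ b, s * ‖M a b‖ * t := by
        refine Finset.sum_le_sum fun a _ => Finset.sum_le_sum fun b _ => ?_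
        rw [norm_mul, norm_mul, RCLike.norm_conj]
        calc ‖w a‖ * (‖M a b‖ * ‖u b‖)
            ≤ s * (‖M a b‖ * t) := by
              apply mul_le_mul (hw a) (mul_le_mul_of_nonneg_left (hu b) (norm_nonneg _))
                (by positivity) hs
          _ = s * ‖M a b‖ * t := by ring
    _ = s * (∑ a, ∑ b, ‖M a b‖) * t := by
        rw [Finset.mul_sum, Finset.sum_mul]
        refine Finset.sum_congr rfl fun a _ => ?_
        rw [Finset.mul_sum, Finset.sum_mul]

theorem stmt_12 (k m g : ℕ) (hg : 1 ≤ g) (ε : ℝ) (hε : 0 < ε)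
    (B : Fin (g - 1) → Matrix (Fin k) (Fin m) ℂ)
    (C : Fin (g - 1) → Matrix (Fin m) (Fin m) ℂ)
    (hCsa : ∀ i, (C i).IsHermitian)
    (D : Matrix (Fin m) (Fin m) ℂ) (hD : D.PosDef)
    (hDε : (D - (ε : ℂ) • 1).PosSemidef)
    (A : Fin (g - 1) → Matrix (Fin k ⊕ Fin m) (Fin k ⊕ Fin m) ℂ)
    (hA : ∀ i, A i = fromBlocks 0 (B i) (B i)ᴴ (C i))
    (Ag : Matrix (Fin k ⊕ Fin m) (Fin k ⊕ Fin m) ℂ)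
    (hAg : Ag = fromBlocks 0 0 0 D) :
    ∃ M : ℝ, 0 < M ∧ ∀ v : (Fin k ⊕ Fin m) → ℂ, dotProduct (star v) v = 1 →
      M * ∑ i, ((dotProduct (star v) ((A i) *ᵥ v)).re) ^ 2 ≤
        (dotProduct (star v) (Ag *ᵥ v)).re := by
  classical
  set KB : Fin (g - 1) → ℝ := fun i => ∑ a, ∑ b, ‖B i a b‖ with hKBdef
  set KC : Fin (g - 1) → ℝ := fun i => ∑ a, ∑ b, ‖C i a b‖ with hKCdef
  have hKB : ∀ i, 0 ≤ KB i := fun i =>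
    Finset.sum_nonneg fun a _ => Finset.sum_nonneg fun b _ => norm_nonneg _
  have hKC : ∀ i, 0 ≤ KC i := fun i =>
    Finset.sum_nonneg fun a _ => Finset.sum_nonneg fun b _ => norm_nonneg _
  set S : ℝ := ∑ i, (2 * KB i + KC i) ^ 2 with hSdef
  have hS : 0 ≤ S := Finset.sum_nonneg fun i _ => sq_nonneg _
  refine ⟨ε / (S + 1), div_pos hε (by linarith), fun v hv => ?_⟩
  set v1 : Fin k → ℂ := fun a => v (Sum.inl a) with hv1def
  set v2 : Fin m → ℂ := fun b => v (Sum.inr b) with hv2def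
  have hvelim : v = Sum.elim v1 v2 := by funext j; cases j <;> rfl
  have hstarelim : star v = Sum.elim (star v1) (star v2) := by
    funext j; cases j <;> rfl
  -- the squared norms
  set n2 : ℝ := ∑ b, ‖v2 b‖ ^ 2 with hn2def
  have hn2nn : 0 ≤ n2 := Finset.sum_nonneg fun b _ => sq_nonneg _
  have hsum : (∑ a, ‖v1 a‖ ^ 2) + n2 = 1 := by
    have h1 : dotProduct (star v) v = ((∑ a, ‖v1 a‖ ^ 2) + n2 : ℝ) := by
      simp only [dotProduct, Pi.star_apply, hn2def]
      rw [Fintype.sum_sum_type]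
      push_cast
      congr 1 <;> refine Finset.sum_congr rfl fun j _ => ?_ <;>
        exact conj_mul_self _
    rw [hv] at h1
    exact_mod_cast h1.symm
  have hn2le1 : n2 ≤ 1 := by
    have := Finset.sum_nonneg (fun a (_ : a ∈ Finset.univ) => sq_nonneg ‖v1 a‖)
    linarith
  have hv1le : ∀ a, ‖v1 a‖ ≤ 1 := by
    intro a
    have h1 : ‖v1 a‖ ^ 2 ≤ 1 := by
      have h2 : ‖v1 a‖ ^ 2 ≤ ∑ a, ‖v1 a‖ ^ 2 :=
        Finset.single_le_sum (fun a _ => sq_nonneg ‖v1 a‖) (Finset.mem_univ a)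
      linarith
    nlinarith [norm_nonneg (v1 a)]
  set t : ℝ := Real.sqrt n2 with htdef
  have htnn : 0 ≤ t := Real.sqrt_nonneg _
  have ht2 : t ^ 2 = n2 := Real.sq_sqrt hn2nn
  have htle1 : t ≤ 1 := by
    rw [htdef]
    have := Real.sqrt_le_sqrt hn2le1
    simpa using this
  have hv2le : ∀ b, ‖v2 b‖ ≤ t := by
    intro b
    have h2 : ‖v2 b‖ ^ 2 ≤ n2 :=
      Finset.single_le_sum (fun b _ => sq_nonneg ‖v2 b‖) (Finset.mem_univ b)
    nlinarith [norm_nonneg (v2 b), htnn]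
  have hv2le1 : ∀ b, ‖v2 b‖ ≤ 1 := fun b => (hv2le b).trans htle1
  -- x_g
  have hxg : dotProduct (star v) (Ag *ᵥ v) = dotProduct (star v2) (D *ᵥ v2) := by
    rw [hAg, hstarelim]
    conv_lhs => rw [hvelim]
    rw [fromBlocks_mulVec, sumElim_dotProduct_sumElim]
    simp
  -- ε·n2 ≤ x_g.re
  have hεn2 : ε * n2 ≤ (dotProduct (star v) (Ag *ᵥ v)).re := by
    have h0 := hDε.dotProduct_mulVec_nonneg v2
    rw [Complex.le_def] at h0
    have h1 : dotProduct (star v2) (((D - (ε : ℂ) • 1)) *ᵥ v2)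
        = dotProduct (star v2) (D *ᵥ v2) - (ε : ℂ) * dotProduct (star v2) v2 := by
      rw [sub_mulVec, dotProduct_sub, smul_mulVec, one_mulVec, dotProduct_smul]
      simp [smul_eq_mul]
    have h2 : (dotProduct (star v2) v2).re = n2 := by
      simp only [dotProduct, Pi.star_apply, hn2def, Complex.re_sum]
      refine Finset.sum_congr rfl fun b _ => ?_
      have := conj_mul_self (v2 b)
      calc ((starRingEnd ℂ) (v2 b) * v2 b).re = (((‖v2 b‖ : ℂ)) ^ 2).re := by rw [this]
        _ = ‖v2 b‖ ^ 2 := by rw [← Complex.ofReal_pow, Complex.ofReal_re]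
    rw [hxg]
    have h3 := h0.1
    rw [h1] at h3
    simp only [Complex.sub_re, Complex.zero_re] at h3
    have h4 : ((ε : ℂ) * dotProduct (star v2) v2).re = ε * n2 := by
      rw [Complex.re_ofReal_mul, h2]
    linarith [h3, h4.symm.le]
  -- bound on each x_i
  have hxi : ∀ i, ((dotProduct (star v) ((A i) *ᵥ v)).re) ^ 2 ≤ (2 * KB i + KC i) ^ 2 * n2 := by
    intro i
    have hsplit : dotProduct (star v) ((A i) *ᵥ v)
        = dotProduct (star v1) (B i *ᵥ v2) + (dotProduct (star v2) ((B i)ᴴ *ᵥ v1)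
          + dotProduct (star v2) (C i *ᵥ v2)) := by
      rw [hA i, hstarelim]
      conv_lhs => rw [hvelim]
      rw [fromBlocks_mulVec, sumElim_dotProduct_sumElim]
      simp [dotProduct_add, add_assoc]
    have hb1 : ‖dotProduct (star v1) (B i *ᵥ v2)‖ ≤ 1 * KB i * t :=
      dot_bound v1 (B i) v2 1 t hv1le hv2le zero_le_one htnn
    have hBH : (∑ a, ∑ b, ‖(B i)ᴴ a b‖) = KB i := by
      rw [hKBdef]
      rw [Finset.sum_comm]
      simp [conjTranspose_apply]
    have hb2 : ‖dotProduct (star v2) ((B i)ᴴ *ᵥ v1)‖ ≤ t * KB i * 1 := by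
      have := dot_bound v2 ((B i)ᴴ) v1 t 1 hv2le hv1le htnn zero_le_one
      rwa [hBH] at this
    have hb3 : ‖dotProduct (star v2) (C i *ᵥ v2)‖ ≤ 1 * KC i * t :=
      dot_bound v2 (C i) v2 1 t hv2le1 hv2le zero_le_one htnn
    have habs : |(dotProduct (star v) ((A i) *ᵥ v)).re| ≤ (2 * KB i + KC i) * t := by
      calc |(dotProduct (star v) ((A i) *ᵥ v)).re|
          ≤ ‖dotProduct (star v) ((A i) *ᵥ v)‖ := Complex.abs_re_le_norm _
        _ ≤ ‖dotProduct (star v1) (B i *ᵥ v2)‖ + (‖dotProduct (star v2) ((B i)ᴴ *ᵥ v1)‖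
            + ‖dotProduct (star v2) (C i *ᵥ v2)‖) := by
              rw [hsplit]; exact (norm_add_le _ _).trans (by
                gcongr; exact norm_add_le _ _)
        _ ≤ 1 * KB i * t + (t * KB i * 1 + 1 * KC i * t) := by linarith
        _ = (2 * KB i + KC i) * t := by ring
    calc ((dotProduct (star v) ((A i) *ᵥ v)).re) ^ 2
        = |(dotProduct (star v) ((A i) *ᵥ v)).re| ^ 2 := (sq_abs _).symm
      _ ≤ ((2 * KB i + KC i) * t) ^ 2 := by
          have h := habs
          nlinarith [abs_nonneg ((dotProduct (star v) ((A i) *ᵥ v)).re)]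
      _ = (2 * KB i + KC i) ^ 2 * n2 := by rw [mul_pow, ht2]
  have hSum2 : ∑ i, ((dotProduct (star v) ((A i) *ᵥ v)).re) ^ 2 ≤ S * n2 := by
    rw [hSdef, Finset.sum_mul]
    exact Finset.sum_le_sum fun i _ => hxi i
  have hfinal : ε / (S + 1) * (S * n2) ≤ ε * n2 := by
    rw [div_mul_eq_mul_div, div_le_iff₀ (by linarith : (0:ℝ) < S + 1)]
    nlinarith [mul_nonneg (mul_nonneg hε.le hS) hn2nn, mul_nonneg hε.le hn2nn]
  have hM : 0 ≤ ε / (S + 1) := div_nonneg hε.le (by linarith)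
  calc ε / (S + 1) * ∑ i, ((dotProduct (star v) ((A i) *ᵥ v)).re) ^ 2
      ≤ ε / (S + 1) * (S * n2) := mul_le_mul_of_nonneg_left hSum2 hM
    _ ≤ ε * n2 := hfinal
    _ ≤ (dotProduct (star v) (Ag *ᵥ v)).re := hεn2
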